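/- The pyramidal Bernstein-Bezier functions B_{ijk}(a,b,c) = B_i^{N−k}(a) B_j^{N−k}(b) B_k^N(c), over all valid indices 0 ≤ k ≤ N, 0 ≤ i,j ≤ N−k, are linearly independent as functions on the open unit cube. -/
import Mathlib


/-- The 1D Bernstein polynomial `B_k^N(x) = C(N,k) x^k (1-x)^(N-k)`. -/
noncomputable def bern (N k : ℕ) (x : ℝ) : ℝ :=
  (N.choose k : ℝ) * x ^ k * (1 - x) ^ (N - k)

/-- The open unit cube in `ℝ³`. -/
def openUnitCube : Set (ℝ × ℝ × ℝ) :=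
  {p | p.1 ∈ Set.Ioo (0:ℝ) 1 ∧ p.2.1 ∈ Set.Ioo (0:ℝ) 1 ∧ p.2.2 ∈ Set.Ioo (0:ℝ) 1}


lemma bernstein_eval (M k : ℕ) (x : ℝ) :
    (bernsteinPolynomial ℝ M k).eval x = bern M k x := by
  simp [bernsteinPolynomial, bern]

lemma bernstein_coeff_lt (M : ℕ) {i j : ℕ} (h : i < j) :
    (bernsteinPolynomial ℝ M j).coeff i = 0 := by
  have e : bernsteinPolynomial ℝ M j
      = ((M.choose j : Polynomial ℝ) * (1 - Polynomial.X) ^ (M - j)) * Polynomial.X ^ j := by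
    rw [bernsteinPolynomial]; ring
  rw [e, Polynomial.coeff_mul_X_pow', if_neg (by omega)]

lemma bernstein_coeff_self (M j : ℕ) :
    (bernsteinPolynomial ℝ M j).coeff j = (M.choose j : ℝ) := by
  have e : bernsteinPolynomial ℝ M j
      = ((M.choose j : Polynomial ℝ) * (1 - Polynomial.X) ^ (M - j)) * Polynomial.X ^ j := by
    rw [bernsteinPolynomial]; ring
  rw [e, Polynomial.coeff_mul_X_pow', if_pos le_rfl, Nat.sub_self,
    Polynomial.coeff_zero_eq_eval_zero]
  simp

lemma bern1d (M : ℕ) (d : Fin (M + 1) → ℝ)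
    (h : ∀ x ∈ Set.Ioo (0:ℝ) 1, ∑ i, d i * bern M i x = 0) :
    ∀ i, d i = 0 := by
  set p : Polynomial ℝ := ∑ i : Fin (M + 1), Polynomial.C (d i) * bernsteinPolynomial ℝ M i
    with hpdef
  have hp : p = 0 := by
    apply Polynomial.eq_zero_of_infinite_isRoot
    apply Set.Infinite.mono _ (Set.Ioo_infinite (by norm_num : (0:ℝ) < 1))
    intro x hx
    simp only [Set.mem_setOf_eq, Polynomial.IsRoot, hpdef, Polynomial.eval_finset_sum,
      Polynomial.eval_mul, Polynomial.eval_C, bernstein_eval]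
    exact h x hx
  have key : ∀ n : ℕ, ∀ i : Fin (M + 1), (i : ℕ) = n → d i = 0 := by
    intro n
    induction n using Nat.strong_induction_on with
    | _ n ih =>
      intro i hi
      have hc : p.coeff n = 0 := by rw [hp]; simp
      rw [hpdef, Polynomial.finset_sum_coeff] at hc
      simp only [Polynomial.coeff_C_mul] at hc
      rw [Finset.sum_eq_single i] at hc
      · subst hi
        rw [bernstein_coeff_self] at hc
        have hMc : (M.choose (i : ℕ) : ℝ) ≠ 0 :=
          Nat.cast_ne_zero.mpr (Nat.choose_pos i.is_le).ne'
        exact (mul_eq_zero.mp hc).resolve_right hMc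
      · intro j _ hj
        rcases lt_trichotomy (j : ℕ) n with hl | he | hg
        · rw [ih _ hl j rfl, zero_mul]
        · exact absurd (Fin.ext (he.trans hi.symm)) hj
        · rw [bernstein_coeff_lt M hg, mul_zero]
      · simp
  intro i
  exact key i i rfl

/-- The pyramidal Bernstein-Bezier functions, over all valid indices, are linearly
independent as functions on the open unit cube. -/
theorem pyramid_bernstein_linearIndependent (N : ℕ) :
    LinearIndependent ℝ
      (fun idx : Σ k : Fin (N + 1), Fin (N - (k : ℕ) + 1) × Fin (N - (k : ℕ) + 1) =>
        fun p : openUnitCube =>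
          bern (N - (idx.1 : ℕ)) (idx.2.1 : ℕ) (p : ℝ × ℝ × ℝ).1 *
            bern (N - (idx.1 : ℕ)) (idx.2.2 : ℕ) (p : ℝ × ℝ × ℝ).2.1 *
            bern N (idx.1 : ℕ) (p : ℝ × ℝ × ℝ).2.2) := by
  rw [linearIndependent_iff']
  intro s g hsum idx hidx
  set g' : (Σ k : Fin (N + 1), Fin (N - (k : ℕ) + 1) × Fin (N - (k : ℕ) + 1)) → ℝ :=
    fun t => if t ∈ s then g t else 0 with hg'
  -- pointwise vanishing over the full index set
  have hpt : ∀ a ∈ Set.Ioo (0:ℝ) 1, ∀ b ∈ Set.Ioo (0:ℝ) 1, ∀ c ∈ Set.Ioo (0:ℝ) 1,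
      ∑ t : Σ k : Fin (N + 1), Fin (N - (k : ℕ) + 1) × Fin (N - (k : ℕ) + 1),
        g' t * (bern (N - (t.1 : ℕ)) (t.2.1 : ℕ) a * bern (N - (t.1 : ℕ)) (t.2.2 : ℕ) b *
          bern N (t.1 : ℕ) c) = 0 := by
    intro a ha b hb c hc
    have hP : ((a, b, c) : ℝ × ℝ × ℝ) ∈ openUnitCube := ⟨ha, hb, hc⟩
    have h0 := congrFun hsum ⟨(a, b, c), hP⟩
    simp only [Finset.sum_apply, Pi.smul_apply, smul_eq_mul, Pi.zero_apply] at h0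
    calc ∑ t : Σ k : Fin (N + 1), Fin (N - (k : ℕ) + 1) × Fin (N - (k : ℕ) + 1),
          g' t * (bern (N - (t.1 : ℕ)) (t.2.1 : ℕ) a * bern (N - (t.1 : ℕ)) (t.2.2 : ℕ) b *
            bern N (t.1 : ℕ) c)
        = ∑ t ∈ s, g t * (bern (N - (t.1 : ℕ)) (t.2.1 : ℕ) a * bern (N - (t.1 : ℕ)) (t.2.2 : ℕ) b *
            bern N (t.1 : ℕ) c) := by
          simp only [hg', ite_mul, zero_mul, Finset.sum_ite_mem, Finset.univ_inter]
      _ = 0 := h0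
  -- peel off the c-variable
  have h1 : ∀ a ∈ Set.Ioo (0:ℝ) 1, ∀ b ∈ Set.Ioo (0:ℝ) 1, ∀ k : Fin (N + 1),
      ∑ ij : Fin (N - (k : ℕ) + 1) × Fin (N - (k : ℕ) + 1),
        g' ⟨k, ij⟩ * (bern (N - (k : ℕ)) (ij.1 : ℕ) a * bern (N - (k : ℕ)) (ij.2 : ℕ) b) = 0 := by
    intro a ha b hb
    apply bern1d N (fun k => ∑ ij : Fin (N - (k : ℕ) + 1) × Fin (N - (k : ℕ) + 1),
      g' ⟨k, ij⟩ * (bern (N - (k : ℕ)) (ij.1 : ℕ) a * bern (N - (k : ℕ)) (ij.2 : ℕ) b))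
    intro c hc
    rw [← hpt a ha b hb c hc, ← Finset.univ_sigma_univ, Finset.sum_sigma]
    refine Finset.sum_congr rfl fun k _ => ?_
    rw [Finset.sum_mul]
    exact Finset.sum_congr rfl fun ij _ => by ring
  -- peel off the a-variable
  have h2 : ∀ b ∈ Set.Ioo (0:ℝ) 1, ∀ k : Fin (N + 1), ∀ i : Fin (N - (k : ℕ) + 1),
      ∑ j : Fin (N - (k : ℕ) + 1), g' ⟨k, (i, j)⟩ * bern (N - (k : ℕ)) (j : ℕ) b = 0 := by
    intro b hb k
    apply bern1d (N - (k : ℕ)) (fun i => ∑ j : Fin (N - (k : ℕ) + 1),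
      g' ⟨k, (i, j)⟩ * bern (N - (k : ℕ)) (j : ℕ) b)
    intro a ha
    rw [← h1 a ha b hb k, Fintype.sum_prod_type]
    refine Finset.sum_congr rfl fun i _ => ?_
    rw [Finset.sum_mul]
    exact Finset.sum_congr rfl fun j _ => by ring
  -- peel off the b-variable
  have h3 : ∀ k : Fin (N + 1), ∀ i j : Fin (N - (k : ℕ) + 1), g' ⟨k, (i, j)⟩ = 0 := by
    intro k i
    apply bern1d (N - (k : ℕ)) (fun j => g' ⟨k, (i, j)⟩)
    intro b hb
    exact h2 b hb k i
  have := h3 idx.1 idx.2.1 idx.2.2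
  simpa [hg', hidx] using this
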